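/- Let G=(V,E) be a graph, let K₂ be the complete graph with vertices a,b, and let P = (G ⊕ K₂, p, r) be a 3-dimensional sphere packing with generic radii. Then there exists a Möbius-equivalent sphere packing P' = (G ⊕ K₂, p', r') such that r'_a > r'_v and r'_b > r'_v for all v ∈ V. -/

import Mathlib

noncomputable section

/-- A `d`-dimensional sphere packing with contact graph `G`, centres `p` and radii `r`:
the spheres have disjoint interiors and two spheres touch iff the vertices are adjacent. -/
def IsSpherePacking {V : Type*} (d : ℕ) (G : SimpleGraph V)
    (p : V → EuclideanSpace ℝ (Fin d)) (r : V → ℝ) : Prop :=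
  (∀ v, 0 < r v) ∧
  ∀ v w : V, v ≠ w →
    r v + r w ≤ dist (p v) (p w) ∧ (dist (p v) (p w) = r v + r w ↔ G.Adj v w)

/-- The radii are generic: injective and algebraically independent over `ℚ`. -/
def GenericRadii {V : Type*} (r : V → ℝ) : Prop :=
  Function.Injective r ∧ AlgebraicIndependent ℚ r

/-- The join `G ⊕ K₂` of `G` with the complete graph on two new vertices
(the two elements of `Fin 2`). -/
def joinK2 {V : Type*} (G : SimpleGraph V) : SimpleGraph (V ⊕ Fin 2) where
  Adj x y :=
    match x, y with
    | Sum.inl u, Sum.inl v => G.Adj u v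
    | Sum.inl _, Sum.inr _ => True
    | Sum.inr _, Sum.inl _ => True
    | Sum.inr i, Sum.inr j => i ≠ j
  symm := by
    constructor
    rintro (u | i) (v | j) h
    · exact h.symm
    · trivial
    · trivial
    · exact h.symm
  loopless := by
    constructor
    rintro (u | i) h
    · exact G.ne_of_adj h rfl
    · exact h rfl

/-- A 3-dimensional Möbius transform with singularity `b₀`:
`φ(u) = a₀ + λ A(u − b₀) / ‖u − b₀‖^τ` with `λ ≠ 0`, `τ ∈ {0, 2}` and `A` a linear
isometry of `ℝ³`. -/
def IsMobiusMap (φ : EuclideanSpace ℝ (Fin 3) → EuclideanSpace ℝ (Fin 3))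
    (b₀ : EuclideanSpace ℝ (Fin 3)) : Prop :=
  ∃ (a₀ : EuclideanSpace ℝ (Fin 3)) (lam : ℝ)
    (A : EuclideanSpace ℝ (Fin 3) ≃ₗᵢ[ℝ] EuclideanSpace ℝ (Fin 3)) (τ : ℕ),
    lam ≠ 0 ∧ (τ = 0 ∨ τ = 2) ∧
    ∀ u, u ≠ b₀ → φ u = a₀ + (lam / ‖u - b₀‖ ^ τ) • A (u - b₀)

/-- Two sphere packings (given by centres and radii over the same vertex set) are
Möbius-equivalent if some Möbius transform maps each sphere of the first packing onto
the corresponding sphere of the second. -/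
def MobiusEquivalent {V : Type*} (p p' : V → EuclideanSpace ℝ (Fin 3))
    (r r' : V → ℝ) : Prop :=
  ∃ φ b₀, IsMobiusMap φ b₀ ∧
    ∀ v : V, b₀ ∉ Metric.sphere (p v) (r v) ∧
      φ '' Metric.sphere (p v) (r v) = Metric.sphere (p' v) (r' v)

open RealInnerProductSpace

local notation "E3" => EuclideanSpace ℝ (Fin 3)

lemma norm_eq_of_sq_eq {a b : ℝ} (ha : 0 ≤ a) (hb : 0 ≤ b) (h : a^2 = b^2) : a = b := by
  nlinarith [sq_nonneg (a - b), sq_nonneg (a + b)]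

lemma scalar_key (n m Z R c : ℝ) (hn : n ≠ 0) (hc : c ≠ 0) (hcdef : c = m^2 - R^2)
    (hsph : n^2 - 2*Z + m^2 = R^2) :
    (1/n^2 * n)^2 - 2*(1/n^2 * (c⁻¹ * Z)) + (c⁻¹ * m)^2 = (R/c)^2 := by
  have hZ : Z = (n^2 + m^2 - R^2)/2 := by linarith
  subst hZ hcdef
  field_simp
  ring

lemma scalar_key2 (n m Z Rv Rw : ℝ) (hcv : n^2 - Rv^2 ≠ 0) (hcw : m^2 - Rw^2 ≠ 0) :
    (((n^2-Rv^2)⁻¹ * n)^2 - 2*((n^2-Rv^2)⁻¹*((m^2-Rw^2)⁻¹*Z)) + ((m^2-Rw^2)⁻¹*m)^2)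
      - (Rv/(n^2-Rv^2) + Rw/(m^2-Rw^2))^2
      = ((n^2-Rv^2)*(m^2-Rw^2))⁻¹ * ((n^2 - 2*Z + m^2) - (Rv+Rw)^2) := by
  field_simp
  ring

lemma scalar_key3 (ra rb rv Z : ℝ) (hra : 0 < ra) (hrb : 0 < rb)
    (hxy : (ra+rv)^2 - 2*Z + (ra+rb)^2 = (rb+rv)^2) :
    (ra+rv)^2 - 2*((ra/(ra+rb))*Z) + (ra/(ra+rb))^2*(ra+rb)^2
      = rv^2 + 4*ra*rb*rv/(ra+rb) := by
  have hZ : Z = ((ra+rv)^2 + (ra+rb)^2 - (rb+rv)^2)/2 := by linarith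
  subst hZ
  have hs : ra + rb ≠ 0 := by positivity
  field_simp
  ring

/-- inversion map at `b₀` -/
def invMap (b₀ : E3) (u : E3) : E3 := b₀ + ((1:ℝ) / ‖u - b₀‖ ^ 2) • (u - b₀)

lemma inv_invol (b₀ : E3) {u : E3} (h : u ≠ b₀) : invMap b₀ (invMap b₀ u) = u := by
  have hz : ‖u - b₀‖ ≠ 0 := by simpa [sub_eq_zero] using h
  have hz2 : ‖u - b₀‖ ^ 2 ≠ 0 := pow_ne_zero _ hz
  have h1 : invMap b₀ u - b₀ = ((1:ℝ) / ‖u - b₀‖ ^ 2) • (u - b₀) := by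
    simp only [invMap]; abel
  have h2 : ‖invMap b₀ u - b₀‖ ^ 2 = 1 / ‖u - b₀‖ ^ 2 := by
    rw [h1, norm_smul, mul_pow, Real.norm_eq_abs, sq_abs]
    rw [sq]; field_simp
  simp only [invMap, h2] at *
  rw [h1, smul_smul]
  rw [show (1:ℝ) / (1 / ‖u - b₀‖ ^ 2) * (1 / ‖u - b₀‖ ^ 2) = 1 by field_simp]
  rw [one_smul]; abel

lemma inv_mem_sphere (b₀ q : E3) (R : ℝ) (hR : 0 < R) (hc : 0 < ‖q - b₀‖ ^ 2 - R ^ 2)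
    {u : E3} (hu : u ∈ Metric.sphere q R) :
    invMap b₀ u ∈ Metric.sphere (b₀ + ((‖q - b₀‖ ^ 2 - R ^ 2)⁻¹) • (q - b₀))
      (R / (‖q - b₀‖ ^ 2 - R ^ 2)) := by
  set c := ‖q - b₀‖ ^ 2 - R ^ 2 with hcdef
  have hune : u ≠ b₀ := by
    rintro rfl
    rw [Metric.mem_sphere, dist_comm, dist_eq_norm] at hu
    nlinarith
  have hz : ‖u - b₀‖ ≠ 0 := by simpa [sub_eq_zero] using hune
  have hz2 : (0:ℝ) < ‖u - b₀‖ ^ 2 := by positivity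
  rw [Metric.mem_sphere, dist_eq_norm] at hu ⊢
  have hsph : ‖u - b₀‖ ^ 2 - 2 * ⟪u - b₀, q - b₀⟫ + ‖q - b₀‖ ^ 2 = R ^ 2 := by
    have h2 : ‖(u - b₀) - (q - b₀)‖ ^ 2 = R ^ 2 := by
      rw [show (u - b₀) - (q - b₀) = u - q by abel, hu]
    rw [norm_sub_sq_real] at h2; linarith
  have hvec : invMap b₀ u - (b₀ + c⁻¹ • (q - b₀))
      = ((1:ℝ) / ‖u - b₀‖ ^ 2) • (u - b₀) - c⁻¹ • (q - b₀) := by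
    simp only [invMap]; abel
  rw [hvec]
  apply norm_eq_of_sq_eq (norm_nonneg _) (by positivity)
  rw [norm_sub_sq_real, norm_smul, norm_smul, inner_smul_left, inner_smul_right]
  simp only [RCLike.conj_to_real, Real.norm_eq_abs, map_one]
  rw [abs_of_nonneg (by positivity : (0:ℝ) ≤ 1 / ‖u - b₀‖^2),
      abs_of_nonneg (le_of_lt (inv_pos.mpr hc))]
  have hcne : c ≠ 0 := ne_of_gt hc
  linear_combination scalar_key ‖u - b₀‖ ‖q - b₀‖ ⟪u - b₀, q - b₀⟫ R c hz hcne hcdef hsph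

lemma inv_image_sphere (b₀ q : E3) (R : ℝ) (hR : 0 < R) (hc : 0 < ‖q - b₀‖ ^ 2 - R ^ 2) :
    invMap b₀ '' Metric.sphere q R
      = Metric.sphere (b₀ + ((‖q - b₀‖ ^ 2 - R ^ 2)⁻¹) • (q - b₀))
        (R / (‖q - b₀‖ ^ 2 - R ^ 2)) := by
  set c := ‖q - b₀‖ ^ 2 - R ^ 2 with hcdef
  have hcne : c ≠ 0 := ne_of_gt hc
  set q' : E3 := b₀ + c⁻¹ • (q - b₀) with hq'def
  set R' : ℝ := R / c with hR'def
  have hR' : 0 < R' := div_pos hR hc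
  have hq'b : q' - b₀ = c⁻¹ • (q - b₀) := by rw [hq'def]; abel
  have hnq' : ‖q' - b₀‖ ^ 2 = c⁻¹ ^ 2 * ‖q - b₀‖ ^ 2 := by
    rw [hq'b, norm_smul, mul_pow, Real.norm_eq_abs, sq_abs]
  have hc' : ‖q' - b₀‖ ^ 2 - R' ^ 2 = c⁻¹ := by
    rw [hnq', hR'def, div_pow]
    field_simp
    linear_combination (‖q - b₀‖^2 - R^2 - c) * c
  have hc'pos : 0 < ‖q' - b₀‖ ^ 2 - R' ^ 2 := by rw [hc']; positivity
  apply Set.Subset.antisymm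
  · rintro _ ⟨u, hu, rfl⟩
    exact inv_mem_sphere b₀ q R hR hc hu
  · intro x hx
    have hxne : x ≠ b₀ := by
      rintro rfl
      rw [Metric.mem_sphere, dist_comm, dist_eq_norm] at hx
      nlinarith
    have h1 := inv_mem_sphere b₀ q' R' hR' hc'pos hx
    have hcen : b₀ + (‖q' - b₀‖ ^ 2 - R' ^ 2)⁻¹ • (q' - b₀) = q := by
      rw [hc', inv_inv, hq'b, smul_smul, mul_inv_cancel₀ hcne, one_smul]
      abel
    have hrad : R' / (‖q' - b₀‖ ^ 2 - R' ^ 2) = R := by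
      rw [hc', hR'def]
      field_simp
    rw [hcen, hrad] at h1
    exact ⟨invMap b₀ x, h1, inv_invol b₀ hxne⟩

lemma inv_dist_sq (b₀ qv qw : E3) (Rv Rw : ℝ)
    (hcv : ‖qv - b₀‖ ^ 2 - Rv ^ 2 ≠ 0) (hcw : ‖qw - b₀‖ ^ 2 - Rw ^ 2 ≠ 0) :
    ‖(b₀ + ((‖qv - b₀‖ ^ 2 - Rv ^ 2)⁻¹) • (qv - b₀))
        - (b₀ + ((‖qw - b₀‖ ^ 2 - Rw ^ 2)⁻¹) • (qw - b₀))‖ ^ 2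
      - (Rv / (‖qv - b₀‖ ^ 2 - Rv ^ 2) + Rw / (‖qw - b₀‖ ^ 2 - Rw ^ 2)) ^ 2
      = ((‖qv - b₀‖ ^ 2 - Rv ^ 2) * (‖qw - b₀‖ ^ 2 - Rw ^ 2))⁻¹
        * (‖qv - qw‖ ^ 2 - (Rv + Rw) ^ 2) := by
  set cv := ‖qv - b₀‖ ^ 2 - Rv ^ 2 with hcvdef
  set cw := ‖qw - b₀‖ ^ 2 - Rw ^ 2 with hcwdef
  have hcvpos : 0 ≤ cv ∨ cv < 0 := le_or_gt 0 cv
  have hD : ‖qv - qw‖ ^ 2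
      = ‖qv - b₀‖ ^ 2 - 2 * ⟪qv - b₀, qw - b₀⟫ + ‖qw - b₀‖ ^ 2 := by
    rw [show qv - qw = (qv - b₀) - (qw - b₀) by abel, norm_sub_sq_real]
  have hvec : (b₀ + cv⁻¹ • (qv - b₀)) - (b₀ + cw⁻¹ • (qw - b₀))
      = cv⁻¹ • (qv - b₀) - cw⁻¹ • (qw - b₀) := by abel
  rw [hvec, hD, norm_sub_sq_real, norm_smul, norm_smul, inner_smul_left, inner_smul_right]
  simp only [RCLike.conj_to_real, Real.norm_eq_abs]
  have habs : ∀ (α : ℝ) (x : E3), (|α| * ‖x‖)^2 = (α * ‖x‖)^2 := by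
    intro α x; rw [mul_pow, mul_pow, sq_abs]
  rw [habs, habs]
  have h2 := scalar_key2 ‖qv - b₀‖ ‖qw - b₀‖ ⟪qv - b₀, qw - b₀⟫ Rv Rw hcv hcw
  linear_combination h2
set_option maxHeartbeats 1000000 in
/-- Any generic-radii sphere packing with contact graph `G ⊕ K₂` is Möbius-equivalent to
one in which the two spheres of `K₂` are strictly larger than all the others. -/
theorem mobius_equiv_large_K2 {V : Type*} [Fintype V] (G : SimpleGraph V)
    (p : V ⊕ Fin 2 → EuclideanSpace ℝ (Fin 3)) (r : V ⊕ Fin 2 → ℝ)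
    (hP : IsSpherePacking 3 (joinK2 G) p r) (hr : GenericRadii r) :
    ∃ (p' : V ⊕ Fin 2 → EuclideanSpace ℝ (Fin 3)) (r' : V ⊕ Fin 2 → ℝ),
      IsSpherePacking 3 (joinK2 G) p' r' ∧ MobiusEquivalent p p' r r' ∧
      ∀ v : V, r' (Sum.inl v) < r' (Sum.inr 0) ∧ r' (Sum.inl v) < r' (Sum.inr 1) := by
  classical
  obtain ⟨hrpos, hcond⟩ := hP
  set a : V ⊕ Fin 2 := Sum.inr 0 with ha
  set b : V ⊕ Fin 2 := Sum.inr 1 with hb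
  have hab : a ≠ b := by simp [ha, hb]
  have hadj : (joinK2 G).Adj a b := by
    show (0 : Fin 2) ≠ 1; decide
  have htan : dist (p a) (p b) = r a + r b := (hcond a b hab).2.mpr hadj
  have hra : 0 < r a := hrpos a
  have hrb : 0 < r b := hrpos b
  set s : ℝ := r a + r b with hs
  have hspos : 0 < s := by positivity
  set y : E3 := p b - p a with hy
  have hny : ‖y‖ = s := by
    rw [hy, ← dist_eq_norm, dist_comm, htan]
  have hyne : y ≠ 0 := by
    intro h; rw [h, norm_zero] at hny; exact absurd hny.symm (ne_of_gt hspos)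
  set t : E3 := p a + (r a / s) • y with ht
  have hta : t - p a = (r a / s) • y := by rw [ht]; abel
  have htb : t - p b = -((r b / s) • y) := by
    have h0 : t - p b = (r a / s) • y - (1:ℝ) • y := by
      rw [one_smul, ht, hy]; abel
    rw [h0, ← sub_smul, ← neg_smul]
    congr 1
    field_simp
    linarith [hs]
  have hnta : ‖t - p a‖ = r a := by
    rw [hta, norm_smul, Real.norm_eq_abs, abs_of_nonneg (by positivity), hny]
    field_simp
  have hntb : ‖t - p b‖ = r b := by
    rw [htb, norm_neg, norm_smul, Real.norm_eq_abs, abs_of_nonneg (by positivity), hny]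
    field_simp
  have hdista : ∀ v : V, ‖p (Sum.inl v) - p a‖ = r a + r (Sum.inl v) := by
    intro v
    have h := (hcond a (Sum.inl v) (by simp [ha])).2.mpr (by trivial)
    rw [dist_eq_norm] at h
    rw [← norm_neg, neg_sub, h]
  have hdistb : ∀ v : V, ‖p (Sum.inl v) - p b‖ = r b + r (Sum.inl v) := by
    intro v
    have h := (hcond b (Sum.inl v) (by simp [hb])).2.mpr (by trivial)
    rw [dist_eq_norm] at h
    rw [← norm_neg, neg_sub, h]
  set K : ℝ := 4 * r a * r b / s with hK
  have hKpos : 0 < K := by positivity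
  have htv : ∀ v : V, ‖p (Sum.inl v) - t‖ ^ 2 = r (Sum.inl v) ^ 2 + K * r (Sum.inl v) := by
    intro v
    set x : E3 := p (Sum.inl v) - p a with hx
    have hX : ‖x‖ = r a + r (Sum.inl v) := hdista v
    have hXY : ‖x - y‖ = r b + r (Sum.inl v) := by
      rw [hx, hy, show p (Sum.inl v) - p a - (p b - p a) = p (Sum.inl v) - p b by abel]
      exact hdistb v
    have hxy : (r a + r (Sum.inl v))^2 - 2*⟪x, y⟫ + (r a + r b)^2
        = (r b + r (Sum.inl v))^2 := by
      have h2 := norm_sub_sq_real x y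
      rw [hX, hXY, hny, hs] at h2
      linarith
    have hvt : p (Sum.inl v) - t = x - (r a / s) • y := by
      rw [hx, ht]; abel
    rw [hvt, norm_sub_sq_real, norm_smul, inner_smul_right, Real.norm_eq_abs,
        abs_of_nonneg (by positivity : (0:ℝ) ≤ r a / s), mul_pow, hX, hny]
    have h3 := scalar_key3 (r a) (r b) (r (Sum.inl v)) ⟪x, y⟫ hra hrb
      (by rw [← hs] at hxy ⊢; exact hxy)
    rw [hK, hs] at *
    linear_combination h3
  -- a unit normal to y
  obtain ⟨n, hn1, hyn⟩ : ∃ n : E3, ‖n‖ = 1 ∧ ⟪y, n⟫ = 0 := by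
    have hfr : Module.finrank ℝ (ℝ ∙ y) = 1 := finrank_span_singleton hyne
    have htot := Submodule.finrank_add_finrank_orthogonal (K := (ℝ ∙ y))
    rw [hfr, finrank_euclideanSpace_fin] at htot
    have hne : ((ℝ ∙ y)ᗮ : Submodule ℝ E3) ≠ ⊥ := by
      intro hbot
      rw [hbot, finrank_bot] at htot
      omega
    obtain ⟨z, hz, hz0⟩ := (Submodule.ne_bot_iff _).mp hne
    have hzn : ‖z‖ ≠ 0 := norm_ne_zero_iff.mpr hz0
    refine ⟨‖z‖⁻¹ • z, ?_, ?_⟩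
    · rw [norm_smul, Real.norm_eq_abs, abs_inv, abs_norm, inv_mul_cancel₀ hzn]
    · rw [inner_smul_right,
        (Submodule.mem_orthogonal _ z).mp hz y (Submodule.mem_span_singleton_self y),
        mul_zero]
  -- choice of ε
  obtain ⟨ε, hε, hε1, hε2⟩ : ∃ ε : ℝ, 0 < ε ∧ ε ^ 2 < K * min (r a) (r b) / 2 ∧
      ∀ v : V, 2 * ε * ‖p (Sum.inl v) - t‖ ≤ K * r (Sum.inl v) / 2 := by
    have hminpos : 0 < min (r a) (r b) := lt_min hra hrb
    have hmin : 0 < K * min (r a) (r b) / 2 := by nlinarith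
    set δ₁ := Real.sqrt (K * min (r a) (r b) / 2) with hδ₁
    have hδ₁pos : 0 < δ₁ := Real.sqrt_pos.mpr hmin
    set f : V → ℝ := fun v => K * r (Sum.inl v) / (4 * (‖p (Sum.inl v) - t‖ + 1)) with hf
    have hfpos : ∀ v, 0 < f v := by
      intro v
      have h1 := hrpos (Sum.inl v)
      have hM : (0:ℝ) ≤ ‖p (Sum.inl v) - t‖ := norm_nonneg _
      exact div_pos (by nlinarith) (by nlinarith)
    obtain ⟨m, hmpos, hmle1, hmle2⟩ : ∃ m : ℝ, 0 < m ∧ m ≤ δ₁ ∧ ∀ v : V, m ≤ f v := by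
      set S : Finset ℝ := insert δ₁ (Finset.univ.image f) with hS
      have hSne : δ₁ ∈ S := Finset.mem_insert_self _ _
      refine ⟨S.min' ⟨δ₁, hSne⟩, ?_, Finset.min'_le _ _ hSne, fun v => Finset.min'_le _ _ ?_⟩
      · apply (Finset.lt_min'_iff _ _).mpr
        intro x hx
        rw [hS, Finset.mem_insert] at hx
        rcases hx with rfl | hx
        · exact hδ₁pos
        · obtain ⟨v, _, rfl⟩ := Finset.mem_image.mp hx
          exact hfpos v
      · rw [hS]
        exact Finset.mem_insert_of_mem (Finset.mem_image_of_mem f (Finset.mem_univ v))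
    refine ⟨m/2, by positivity, ?_, ?_⟩
    · have hsq : (m/2)^2 < δ₁^2 := by nlinarith
      calc (m/2)^2 < δ₁^2 := hsq
        _ = K * min (r a) (r b) / 2 := Real.sq_sqrt hmin.le
    · intro v
      have hle : m ≤ f v := hmle2 v
      have hM : (0:ℝ) ≤ ‖p (Sum.inl v) - t‖ := norm_nonneg _
      have hfv4 : f v * (4 * (‖p (Sum.inl v) - t‖ + 1)) = K * r (Sum.inl v) := by
        rw [hf]
        field_simp
      nlinarith [hfpos v, hrpos (Sum.inl v)]
  set b₀ : E3 := t + ε • n with hb₀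
  set c : V ⊕ Fin 2 → ℝ := fun w => ‖p w - b₀‖ ^ 2 - r w ^ 2 with hc
  have hcdef : ∀ w, c w = ‖p w - b₀‖ ^ 2 - r w ^ 2 := fun w => rfl
  have hca : c a = ε ^ 2 := by
    have h1 : p a - b₀ = -((r a / s) • y + ε • n) := by
      rw [hb₀, ht]; abel
    rw [hcdef, h1, norm_neg, norm_add_sq_real, inner_smul_left, inner_smul_right, hyn,
        norm_smul, norm_smul, Real.norm_eq_abs, Real.norm_eq_abs,
        abs_of_nonneg (by positivity : (0:ℝ) ≤ r a / s), abs_of_nonneg hε.le, hny, hn1]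
    have h2 : r a / s * s = r a := by field_simp
    rw [h2]
    ring
  have hcb : c b = ε ^ 2 := by
    have h1 : p b - b₀ = (r b / s) • y - ε • n := by
      have h0 : p b - b₀ = -(t - p b) - ε • n := by rw [hb₀]; abel
      rw [h0, htb, neg_neg]
    rw [hcdef, h1, norm_sub_sq_real, inner_smul_left, inner_smul_right, hyn,
        norm_smul, norm_smul, Real.norm_eq_abs, Real.norm_eq_abs,
        abs_of_nonneg (by positivity : (0:ℝ) ≤ r b / s), abs_of_nonneg hε.le, hny, hn1]
    have h2 : r b / s * s = r b := by field_simp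
    rw [h2]
    ring
  have hcv : ∀ v : V, K * r (Sum.inl v) / 2 ≤ c (Sum.inl v) := by
    intro v
    have h1 : p (Sum.inl v) - b₀ = (p (Sum.inl v) - t) - ε • n := by
      rw [hb₀]; abel
    have h2 : ⟪p (Sum.inl v) - t, n⟫ ≤ ‖p (Sum.inl v) - t‖ := by
      calc ⟪p (Sum.inl v) - t, n⟫ ≤ ‖p (Sum.inl v) - t‖ * ‖n‖ := real_inner_le_norm _ _
        _ = ‖p (Sum.inl v) - t‖ := by rw [hn1, mul_one]
    have h3 : ‖p (Sum.inl v) - b₀‖ ^ 2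
        = ‖p (Sum.inl v) - t‖ ^ 2 - 2 * ε * ⟪p (Sum.inl v) - t, n⟫ + ε ^ 2 := by
      rw [h1, norm_sub_sq_real, inner_smul_right, norm_smul, Real.norm_eq_abs,
          abs_of_nonneg hε.le, hn1, mul_one]
      ring
    have h4 := hε2 v
    have h5 := htv v
    rw [hcdef]
    nlinarith [mul_le_mul_of_nonneg_left h2 (by positivity : (0:ℝ) ≤ 2 * ε), sq_nonneg ε]
  have hcpos : ∀ w, 0 < c w := by
    rintro (v | i)
    · calc (0:ℝ) < K * r (Sum.inl v) / 2 := by nlinarith [hrpos (Sum.inl v)]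
        _ ≤ c (Sum.inl v) := hcv v
    · fin_cases i
      · show (0:ℝ) < c a
        rw [hca]; exact pow_pos hε 2
      · show (0:ℝ) < c b
        rw [hcb]; exact pow_pos hε 2
  clear_value a b s y t K b₀ c
  -- the new packing
  refine ⟨fun w => b₀ + (c w)⁻¹ • (p w - b₀), fun w => r w / (c w), ?_, ?_, ?_⟩
  · constructor
    · intro w; exact div_pos (hrpos w) (hcpos w)
    · intro v w hvw
      have hcvne : ‖p v - b₀‖ ^ 2 - r v ^ 2 ≠ 0 := by rw [← hcdef]; exact ne_of_gt (hcpos v)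
      have hcwne : ‖p w - b₀‖ ^ 2 - r w ^ 2 ≠ 0 := by rw [← hcdef]; exact ne_of_gt (hcpos w)
      have hid := inv_dist_sq b₀ (p v) (p w) (r v) (r w) hcvne hcwne
      have hold := hcond v w hvw
      rw [dist_eq_norm] at hold
      have hsum : 0 < r v / c v + r w / c w := by
        have h1 := div_pos (hrpos v) (hcpos v)
        have h2 := div_pos (hrpos w) (hcpos w)
        linarith
      have hsumold : 0 < r v + r w := by have := hrpos v; have := hrpos w; linarith
      have hprod : 0 < ((c v) * (c w))⁻¹ := by
        have := hcpos v; have := hcpos w; positivity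
      rw [dist_eq_norm]
      dsimp only
      rw [← hcdef v, ← hcdef w] at hid
      constructor
      · have h1 : 0 ≤ ‖p v - p w‖ ^ 2 - (r v + r w) ^ 2 := by
          nlinarith [hold.1, norm_nonneg (p v - p w)]
        have h2 : 0 ≤ ‖(b₀ + (c v)⁻¹ • (p v - b₀)) - (b₀ + (c w)⁻¹ • (p w - b₀))‖ ^ 2
            - (r v / c v + r w / c w) ^ 2 := by
          rw [hid]; positivity
        nlinarith [norm_nonneg ((b₀ + (c v)⁻¹ • (p v - b₀)) - (b₀ + (c w)⁻¹ • (p w - b₀)))]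
      · rw [← hold.2]
        constructor
        · intro h
          have h2 : ‖(b₀ + (c v)⁻¹ • (p v - b₀)) - (b₀ + (c w)⁻¹ • (p w - b₀))‖ ^ 2
              - (r v / c v + r w / c w) ^ 2 = 0 := by rw [h]; ring
          have h4 : ((c v) * (c w))⁻¹ * (‖p v - p w‖ ^ 2 - (r v + r w) ^ 2) = 0 := by
            rw [← hid]; exact h2
          have h5 := (mul_eq_zero.mp h4).resolve_left (ne_of_gt hprod)
          have h6 : ‖p v - p w‖ ^ 2 = (r v + r w) ^ 2 := by linarith
          exact norm_eq_of_sq_eq (norm_nonneg _) hsumold.le h6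
        · intro h
          have h3 : ‖p v - p w‖ ^ 2 - (r v + r w) ^ 2 = 0 := by rw [h]; ring
          rw [h3, mul_zero] at hid
          have h4 : ‖(b₀ + (c v)⁻¹ • (p v - b₀)) - (b₀ + (c w)⁻¹ • (p w - b₀))‖ ^ 2
              = (r v / c v + r w / c w) ^ 2 := by linarith
          exact norm_eq_of_sq_eq (norm_nonneg _) hsum.le h4
  · refine ⟨invMap b₀, b₀, ⟨b₀, 1, LinearIsometryEquiv.refl ℝ E3, 2, one_ne_zero,
      Or.inr rfl, ?_⟩, ?_⟩
    · intro u hu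
      simp [invMap]
    · intro w
      constructor
      · intro hmem
        rw [Metric.mem_sphere, dist_comm, dist_eq_norm] at hmem
        have h1 := hcpos w
        rw [hcdef, hmem] at h1
        simp at h1
      · have himg := inv_image_sphere b₀ (p w) (r w) (hrpos w) (by rw [← hcdef]; exact hcpos w)
        dsimp only
        rw [hcdef w]
        exact himg
  · intro v
    have hbound : r (Sum.inl v) / c (Sum.inl v) ≤ 2 / K := by
      rw [div_le_div_iff₀ (hcpos (Sum.inl v)) hKpos]
      have h1 := hcv v
      nlinarith [hrpos (Sum.inl v)]
    have hmins : min (r a) (r b) ≤ r a := min_le_left _ _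
    have hminb : min (r a) (r b) ≤ r b := min_le_right _ _
    have hεa : ε ^ 2 < K * r a / 2 := by
      nlinarith [mul_le_mul_of_nonneg_left hmins hKpos.le]
    have hεb : ε ^ 2 < K * r b / 2 := by
      nlinarith [mul_le_mul_of_nonneg_left hminb hKpos.le]
    have hba : 2 / K < r a / c a := by
      rw [hca, div_lt_div_iff₀ hKpos (pow_pos hε 2)]
      nlinarith
    have hbb : 2 / K < r b / c b := by
      rw [hcb, div_lt_div_iff₀ hKpos (pow_pos hε 2)]
      nlinarith
    constructor
    · calc r (Sum.inl v) / c (Sum.inl v) ≤ 2 / K := hbound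
        _ < r a / c a := hba
    · calc r (Sum.inl v) / c (Sum.inl v) ≤ 2 / K := hbound
        _ < r b / c b := hbb

end
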